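/- For every real ε with 0 < ε < 3, for all sufficiently large n : ℕ one has (3 - ε)^n ≤ ((∑ t in Finset.range (n - Nat.sqrt n + 1), (n - Nat.sqrt n).choose (2*t) * catalan t : ℕ) : ℝ); that is, the lower bound for the representation gap of the truncated Motzkin monoid grows exponentially with base 3. -/

import Mathlib

open Finset Filter

/-- Pairing up a sum over `range (2*N)`. -/
lemma sum_range_two_mul (N : ℕ) (f : ℕ → ℤ) :
    ∑ k ∈ Finset.range (2 * N), f k
      = ∑ t ∈ Finset.range N, (f (2 * t) + f (2 * t + 1)) := by
  induction N with
  | zero => simp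
  | succ N ih =>
      have h2 : 2 * (N + 1) = (2 * N + 1) + 1 := by ring
      rw [h2, Finset.sum_range_succ, Finset.sum_range_succ, ih, Finset.sum_range_succ,
        add_assoc]

/-- `3^m + (-1)^m = 2 * ∑ C(m, 2t) 4^t` over `ℤ`. -/
lemma even_binom_sum (m : ℕ) :
    (3 : ℤ) ^ m + (-1) ^ m
      = 2 * ∑ t ∈ Finset.range (m + 1), (m.choose (2 * t) : ℤ) * 4 ^ t := by
  have h3 : (3 : ℤ) ^ m = ∑ k ∈ Finset.range (m + 1), (2 : ℤ) ^ k * (m.choose k) := by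
    have := add_pow (2 : ℤ) 1 m
    simpa using this
  have h1 : (-1 : ℤ) ^ m = ∑ k ∈ Finset.range (m + 1), (-2 : ℤ) ^ k * (m.choose k) := by
    have := add_pow (-2 : ℤ) 1 m
    norm_num at this
    simpa using this
  rw [h3, h1, ← Finset.sum_add_distrib]
  -- extend the range to 2*(m+1); the extra terms vanish since choose m k = 0 for k > m
  have hext : ∑ k ∈ Finset.range (m + 1),
        ((2 : ℤ) ^ k * (m.choose k) + (-2 : ℤ) ^ k * (m.choose k))
      = ∑ k ∈ Finset.range (2 * (m + 1)),
        ((2 : ℤ) ^ k * (m.choose k) + (-2 : ℤ) ^ k * (m.choose k)) := by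
    apply Finset.sum_subset
    · apply Finset.range_subset_range.2; omega
    · intro k hk hk'
      have : m < k := by
        simp only [Finset.mem_range] at hk hk' ⊢; omega
      rw [Nat.choose_eq_zero_of_lt this]
      push_cast; ring
  rw [hext, sum_range_two_mul, Finset.mul_sum]
  apply Finset.sum_congr rfl
  intro t _
  have e1 : ((-2 : ℤ)) ^ (2 * t) = 4 ^ t := by rw [pow_mul]; norm_num
  have e2 : ((-2 : ℤ)) ^ (2 * t + 1) = -(4 ^ t * 2) := by rw [pow_succ, pow_mul]; norm_num
  have e3 : (2 : ℤ) ^ (2 * t) = 4 ^ t := by rw [pow_mul]; norm_num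
  have e4 : (2 : ℤ) ^ (2 * t + 1) = 4 ^ t * 2 := by rw [pow_succ, pow_mul]; norm_num
  rw [e1, e2, e3, e4]
  ring

/-- Key natural-number lower bound: `3^m ≤ 2(2m+1)(m+1) · Motz m + 1`. -/
lemma key_motz_bound (m : ℕ) :
    3 ^ m ≤ 2 * (2 * m + 1) * (m + 1) *
      (∑ t ∈ Finset.range (m + 1), m.choose (2 * t) * catalan t) + 1 := by
  -- first: 3^m ≤ 2 * ∑ C(m,2t) 4^t + 1 over ℤ
  have h1 : (3 : ℤ) ^ m ≤ 2 * ∑ t ∈ Finset.range (m + 1), (m.choose (2 * t) : ℤ) * 4 ^ t + 1 := by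
    have := even_binom_sum m
    have hpm : (-1 : ℤ) ^ m = 1 ∨ (-1 : ℤ) ^ m = -1 := by
      rcases Nat.even_or_odd m with h | h
      · left; exact h.neg_one_pow
      · right; exact h.neg_one_pow
    rcases hpm with h | h <;> omega
  -- convert to ℕ
  have h1' : 3 ^ m ≤ 2 * (∑ t ∈ Finset.range (m + 1), m.choose (2 * t) * 4 ^ t) + 1 := by
    have : ((3 ^ m : ℕ) : ℤ) ≤ ((2 * (∑ t ∈ Finset.range (m + 1), m.choose (2 * t) * 4 ^ t) + 1 : ℕ) : ℤ) := by
      push_cast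
      exact h1
    exact_mod_cast this
  -- second: 4^t ≤ (2m+1)(m+1) catalan t for t ≤ m
  have h2 : ∑ t ∈ Finset.range (m + 1), m.choose (2 * t) * 4 ^ t
      ≤ (2 * m + 1) * (m + 1) * ∑ t ∈ Finset.range (m + 1), m.choose (2 * t) * catalan t := by
    rw [Finset.mul_sum]
    apply Finset.sum_le_sum
    intro t ht
    have htm : t ≤ m := by simpa [Nat.lt_succ_iff] using ht
    have hcb : 4 ^ t ≤ (2 * t + 1) * ((t + 1) * catalan t) := by
      rw [succ_mul_catalan_eq_centralBinom, Nat.centralBinom]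
      exact Nat.four_pow_le_two_mul_add_one_mul_central_binom t
    calc m.choose (2 * t) * 4 ^ t
        ≤ m.choose (2 * t) * ((2 * t + 1) * ((t + 1) * catalan t)) :=
          Nat.mul_le_mul_left _ hcb
      _ ≤ m.choose (2 * t) * ((2 * m + 1) * ((m + 1) * catalan t)) := by
          apply Nat.mul_le_mul_left
          apply Nat.mul_le_mul (by omega)
          exact Nat.mul_le_mul_right _ (by omega)
      _ = (2 * m + 1) * (m + 1) * (m.choose (2 * t) * catalan t) := by ring
  calc 3 ^ m ≤ 2 * (∑ t ∈ Finset.range (m + 1), m.choose (2 * t) * 4 ^ t) + 1 := h1'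
    _ ≤ 2 * ((2 * m + 1) * (m + 1) * ∑ t ∈ Finset.range (m + 1), m.choose (2 * t) * catalan t) + 1 := by
        exact Nat.add_le_add_right (Nat.mul_le_mul_left _ h2) 1
    _ = 2 * (2 * m + 1) * (m + 1) * (∑ t ∈ Finset.range (m + 1), m.choose (2 * t) * catalan t) + 1 := by
        ring

/-- For every 0 < ε < 3, eventually (3 - ε)^n ≤ Motz (n - ⌊√n⌋). -/
theorem motzkin_truncated_exponential_lower_bound :
    ∀ ε : ℝ, 0 < ε → ε < 3 →
      ∀ᶠ n : ℕ in Filter.atTop,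
        (3 - ε) ^ n ≤
          ((∑ t ∈ Finset.range (n - Nat.sqrt n + 1),
              (n - Nat.sqrt n).choose (2*t) * catalan t : ℕ) : ℝ) := by
  intro ε hε hε3
  set b : ℝ := 3 - ε / 2 with hbdef
  have hb1 : 1 < b := by simp only [hbdef]; linarith
  have hb0 : 0 < b := by linarith
  have hblt3 : b < 3 := by simp only [hbdef]; linarith
  set c : ℝ := 3 / b with hcdef
  have hc1 : 1 < c := by
    rw [hcdef, lt_div_iff₀ hb0]; linarith
  obtain ⟨L, hL⟩ : ∃ L : ℕ, (3 : ℝ) < c ^ L := pow_unbounded_of_one_lt 3 hc1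
  set r : ℝ := (3 - ε) / b with hrdef
  have hr0 : 0 ≤ r := by
    apply div_nonneg (by linarith) hb0.le
  have hr1 : r < 1 := by
    rw [hrdef, div_lt_one hb0]; simp only [hbdef]; linarith
  have htend : Filter.Tendsto (fun n : ℕ => 12 * (n : ℝ) ^ 2 * r ^ n + (1 / b) ^ n)
      Filter.atTop (nhds 0) := by
    have t1 := (tendsto_pow_const_mul_const_pow_of_lt_one 2 hr0 hr1).const_mul (12 : ℝ)
    have t2 : Filter.Tendsto (fun n : ℕ => (1 / b) ^ n) Filter.atTop (nhds 0) := by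
      apply tendsto_pow_atTop_nhds_zero_of_lt_one
      · positivity
      · rw [div_lt_one hb0]; linarith
    have := t1.add t2
    simpa [mul_assoc] using this
  have h1 : ∀ᶠ n : ℕ in Filter.atTop, 12 * (n : ℝ) ^ 2 * r ^ n + (1 / b) ^ n ≤ 1 :=
    (htend.eventually_lt_const (by norm_num : (0:ℝ) < 1)).mono fun n h => h.le
  filter_upwards [h1, Filter.eventually_ge_atTop ((L + 2) * (L + 2)), Filter.eventually_ge_atTop 1]
    with n hn1 hn2 hn3
  set s := Nat.sqrt n with hsdef
  set m := n - s with hmdef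
  have hsn : s ≤ n := Nat.sqrt_le_self n
  have hss : s * s ≤ n := Nat.sqrt_le n
  have hsL : L + 2 ≤ s := Nat.le_sqrt.2 hn2
  have hnms : n = m + s := by omega
  have hLs : L * s ≤ m := by
    have h2' : L * s + s ≤ n := by
      have := le_trans (Nat.mul_le_mul_right s (show L + 1 ≤ s by omega)) hss
      rwa [add_mul, one_mul] at this
    exact Nat.le_sub_of_add_le h2'
  have hmn : m ≤ n := Nat.sub_le n n.sqrt
  -- cast key bound
  set M : ℝ := ((∑ t ∈ Finset.range (m + 1), m.choose (2 * t) * catalan t : ℕ) : ℝ) with hMdef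
  have hM0 : 0 ≤ M := by positivity
  set D : ℝ := 2 * (2 * (m : ℝ) + 1) * ((m : ℝ) + 1) with hDdef
  have hD0 : 0 < D := by positivity
  have hkey : (3 : ℝ) ^ m ≤ D * M + 1 := by
    have := key_motz_bound m
    have hcast : ((3 ^ m : ℕ) : ℝ) ≤ ((2 * (2 * m + 1) * (m + 1) *
        (∑ t ∈ Finset.range (m + 1), m.choose (2 * t) * catalan t) + 1 : ℕ) : ℝ) := by
      exact_mod_cast this
    push_cast at hcast
    calc (3 : ℝ) ^ m ≤ _ := hcast
      _ = D * M + 1 := by rw [hDdef, hMdef]; push_cast; ring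
  -- b^n ≤ 3^m
  have hbn : b ^ n ≤ (3 : ℝ) ^ m := by
    have hbs : b ^ s ≤ c ^ m := by
      calc b ^ s ≤ 3 ^ s := pow_le_pow_left₀ hb0.le hblt3.le s
        _ ≤ (c ^ L) ^ s := pow_le_pow_left₀ (by norm_num) hL.le s
        _ = c ^ (L * s) := by rw [← pow_mul]
        _ ≤ c ^ m := pow_le_pow_right₀ hc1.le hLs
    calc b ^ n = b ^ m * b ^ s := by rw [hnms, pow_add]
      _ ≤ b ^ m * c ^ m := by
          apply mul_le_mul_of_nonneg_left hbs (pow_nonneg hb0.le m)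
      _ = (b * c) ^ m := by rw [mul_pow]
      _ = (3 : ℝ) ^ m := by
          congr 1
          rw [hcdef]
          field_simp
  -- (3-ε)^n * D + 1 ≤ b^n
  have hDn : D ≤ 12 * (n : ℝ) ^ 2 := by
    have hmnr : (m : ℝ) ≤ (n : ℝ) := by exact_mod_cast hmn
    have hn1r : (1 : ℝ) ≤ (n : ℝ) := by exact_mod_cast hn3
    rw [hDdef]
    nlinarith
  have hεn0 : 0 ≤ (3 - ε) ^ n := pow_nonneg (by linarith) n
  have hmain : (3 - ε) ^ n * D + 1 ≤ b ^ n := by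
    have hmul := mul_le_mul_of_nonneg_right hn1 (le_of_lt (pow_pos hb0 n))
    have hrb : r ^ n * b ^ n = (3 - ε) ^ n := by
      rw [← mul_pow, hrdef, div_mul_cancel₀]
      exact ne_of_gt hb0
    have hib : (1 / b) ^ n * b ^ n = 1 := by
      rw [← mul_pow, one_div_mul_cancel (ne_of_gt hb0), one_pow]
    calc (3 - ε) ^ n * D + 1 ≤ (3 - ε) ^ n * (12 * (n : ℝ) ^ 2) + 1 := by
          apply add_le_add_left
          exact mul_le_mul_of_nonneg_left hDn hεn0
      _ = 12 * (n : ℝ) ^ 2 * (r ^ n * b ^ n) + (1 / b) ^ n * b ^ n := by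
          rw [hrb, hib]; ring
      _ = (12 * (n : ℝ) ^ 2 * r ^ n + (1 / b) ^ n) * b ^ n := by ring
      _ ≤ 1 * b ^ n := hmul
      _ = b ^ n := one_mul _
  -- combine
  have hfinal : (3 - ε) ^ n * D ≤ D * M := by
    have : (3 - ε) ^ n * D + 1 ≤ D * M + 1 := le_trans hmain (le_trans hbn hkey)
    linarith
  have : (3 - ε) ^ n ≤ M := by
    rw [mul_comm] at hfinal
    exact le_of_mul_le_mul_left hfinal hD0
  simpa [hMdef, hmdef, hsdef] using this
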